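/- arXiv:2103.16425 — 3 statements merged into one kernel-verified Lean document; each statement's English description precedes it below -/
import Mathlib

section
/- If the greedy policy π^g begins to transmit a packet j at time t at speed s^g(t) > 3W/D, then no packet was generated in the interval [t − 2D/3, t). -/
open MeasureTheory Set

noncomputable section

/-- An increasing convex power function `P : [0,∞) → [0,∞)` with `P 0 = 0`:
transmitting at speed `s ≥ 0` consumes power `P s`. -/
structure PowerFn where
  P : ℝ → ℝ
  mono : StrictMonoOn P (Set.Ici (0:ℝ))
  convex : ConvexOn ℝ (Set.Ici (0:ℝ)) P
  zero : P 0 = 0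
  nonneg : ∀ x, 0 ≤ x → 0 ≤ P x

/-- Global system parameters: packet size `W > 0` (bits), peak-AoI threshold `D > 0`,
and the power function. -/
structure Params where
  W : ℝ
  D : ℝ
  pf : PowerFn
  hW : 0 < W
  hD : 0 < D

/-- A problem instance: time horizon `T`, initial age `Δ0 < D - ε`, and packet
generation times `gen 0 < gen 1 < ⋯` with inter-generation times `< D - ε`. -/
structure Arrivals (pr : Params) where
  T : ℝ
  Δ0 : ℝ
  ε : ℝ
  gen : ℕ → ℝ
  hT : 0 < T
  hε : 0 < ε
  hΔ0_nonneg : 0 ≤ Δ0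
  hΔ0 : Δ0 < pr.D - ε
  gen_nonneg : ∀ i, 0 ≤ gen i
  gen_mono : StrictMono gen
  gen_gap : ∀ i, gen (i + 1) - gen i < pr.D - ε
  gen_first : gen 0 + Δ0 < pr.D - ε

/-- A (realized) transmission schedule on an instance: at each time `t` the node
transmits packet `assign t` (or none) at speed `speed t ≥ 0`; a packet may only be
transmitted after it is generated, and the speed is `0` when the node is idle. -/
structure Schedule (pr : Params) (σ : Arrivals pr) where
  speed : ℝ → ℝ
  assign : ℝ → Option ℕ
  speed_nonneg : ∀ t, 0 ≤ speed t
  speed_integrable : ∀ a b : ℝ, IntervalIntegrable speed volume a b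
  idle_speed : ∀ t, assign t = none → speed t = 0
  assign_after_gen : ∀ t i, assign t = some i → σ.gen i ≤ t

namespace Schedule

variable {pr : Params} {σ : Arrivals pr}

/-- The speed devoted to packet `i` at time `u`. -/
def txSpeed (S : Schedule pr σ) (i : ℕ) : ℝ → ℝ :=
  fun u => if S.assign u = some i then S.speed u else 0

/-- Bits of packet `i` transmitted during the interval `[a, b)`. -/
def bitsIn (S : Schedule pr σ) (i : ℕ) (a b : ℝ) : ℝ :=
  ∫ u in a..b, S.txSpeed i u

/-- Bits of packet `i` transmitted up to time `t`. -/
def bits (S : Schedule pr σ) (i : ℕ) (t : ℝ) : ℝ := S.bitsIn i 0 t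

/-- Packet `i` has been delivered by time `t`: all of its `W` bits are transmitted. -/
def Delivered (S : Schedule pr σ) (i : ℕ) (t : ℝ) : Prop :=
  pr.W ≤ S.bits i t

/-- `μ(t)`: the generation time of the latest packet delivered by time `t`
(equal to `-Δ0` if no packet has been delivered yet). -/
def latest (S : Schedule pr σ) (t : ℝ) : ℝ :=
  sSup (insert (-σ.Δ0) {x | ∃ i, S.Delivered i t ∧ x = σ.gen i})

/-- The age of information `Δ(t) = t - μ(t)`. -/
def age (S : Schedule pr σ) (t : ℝ) : ℝ := t - S.latest t

/-- The deadline `d(t) = μ(t) + D`. -/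
def deadline (S : Schedule pr σ) (t : ℝ) : ℝ := S.latest t + pr.D

/-- Feasibility: the peak-AoI constraint `Δ(t) < D` holds for all `t ∈ [0, T]`. -/
def Feasible (S : Schedule pr σ) : Prop :=
  ∀ t, 0 ≤ t → t ≤ σ.T → S.age t < pr.D

/-- The energy consumed over `[0, T]`. -/
def energy (S : Schedule pr σ) : ℝ :=
  ∫ t in (0:ℝ)..σ.T, pr.pf.P (S.speed t)

/-- The energy consumed over `[0, T]` while transmitting packets from the set `A`. -/
def energyOn (S : Schedule pr σ) (A : Set ℕ) : ℝ :=
  ∫ t in (0:ℝ)..σ.T,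
    Set.indicator {u : ℝ | ∃ j ∈ A, S.assign u = some j}
      (fun u => pr.pf.P (S.speed u)) t

/-- The schedule transmits packet `i` (at least partially). -/
def Transmits (S : Schedule pr σ) (i : ℕ) : Prop := ∃ t, S.assign t = some i

/-- The delivery time of packet `i`. -/
def delTime (S : Schedule pr σ) (i : ℕ) : ℝ := sInf {t | S.Delivered i t}

/-- Packet `i` is fresh at time `t`: generated by time `t`, later than `μ(t)`. -/
def Fresh (S : Schedule pr σ) (i : ℕ) (t : ℝ) : Prop :=
  σ.gen i ≤ t ∧ S.latest t < σ.gen i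

/-- Packet `i` is available at time `t`: fresh and not yet delivered. -/
def Available (S : Schedule pr σ) (i : ℕ) (t : ℝ) : Prop :=
  S.Fresh i t ∧ ¬ S.Delivered i t

/-- The transmission of packet `i` begins at time `r`. -/
def StartsAt (S : Schedule pr σ) (i : ℕ) (r : ℝ) : Prop :=
  S.assign r = some i ∧ ∀ u, u < r → S.assign u ≠ some i

/-- The speed `s^g(t) = max{W/(d(t) - t), 3W/D}` used by the greedy policy. -/
def gspeed (S : Schedule pr σ) (t : ℝ) : ℝ :=
  max (pr.W / (S.deadline t - t)) (3 * pr.W / pr.D)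

/-- The schedule follows the greedy policy `π^g`: it never idles at a time of
`[0,T]` when `d(t) ≤ T` and a fresh undelivered packet is available; whenever it
begins transmitting a packet (at a time with `d(t) ≤ T`), that packet is the
latest available fresh one, and it is transmitted non-preemptively at the constant
speed `s^g(t) = max{W/(d(t)-t), 3W/D}` until all `W` bits are delivered. -/
def IsGreedy (S : Schedule pr σ) : Prop :=
  (∀ t, 0 ≤ t → t ≤ σ.T → S.assign t = none → S.deadline t ≤ σ.T →
      ¬ ∃ i, S.Available i t) ∧
  (∀ i r, S.StartsAt i r →
      S.deadline r ≤ σ.T ∧ S.Available i r ∧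
      (∀ j, S.Available j r → σ.gen j ≤ σ.gen i) ∧
      (∀ u, r ≤ u → u < r + pr.W / S.gspeed r →
        S.assign u = some i ∧ S.speed u = S.gspeed r)) ∧
  (∀ t i, S.assign t = some i →
      ∃ r, S.StartsAt i r ∧ r ≤ t ∧ t < r + pr.W / S.gspeed r)

end Schedule

/-- A policy maps every instance to a schedule. -/
def Policy (pr : Params) := ∀ σ : Arrivals pr, Schedule pr σ

/-- Two instances agree up to time `t`: same horizon, same initial age, and the
same packet generation times among packets generated by time `t`. -/
def AgreeUpTo (pr : Params) (σ σ' : Arrivals pr) (t : ℝ) : Prop :=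
  σ.T = σ'.T ∧ σ.Δ0 = σ'.Δ0 ∧
  ∀ i, (σ.gen i ≤ t ∨ σ'.gen i ≤ t) → σ.gen i = σ'.gen i

/-- A causal (online) policy: its decisions up to time `t` depend only on the
information available by time `t`. -/
def Causal {pr : Params} (π : Policy pr) : Prop :=
  ∀ σ σ' t, AgreeUpTo pr σ σ' t →
    ∀ u, u ≤ t → (π σ).speed u = (π σ').speed u ∧ (π σ).assign u = (π σ').assign u

/-- A feasible policy satisfies the peak-AoI constraint on every instance. -/
def FeasiblePolicy {pr : Params} (π : Policy pr) : Prop := ∀ σ, (π σ).Feasible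

/-- An optimal offline policy: feasible, and on every instance it consumes no more
energy than any other feasible schedule (it knows all generation times in advance). -/
def OffOpt {pr : Params} (π : Policy pr) : Prop :=
  FeasiblePolicy π ∧
  ∀ (σ : Arrivals pr) (S : Schedule pr σ), S.Feasible → (π σ).energy ≤ S.energy

/-- A greedy policy: causal and following the greedy rule on every instance. -/
def GreedyPolicy {pr : Params} (π : Policy pr) : Prop :=
  Causal π ∧ ∀ σ, (π σ).IsGreedy

namespace Schedule

variable {pr : Params} {σ : Arrivals pr} {S : Schedule pr σ}

lemma aux_gspeed_pos (S : Schedule pr σ) (r : ℝ) : 0 < S.gspeed r :=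
  lt_of_lt_of_le (div_pos (by linarith [pr.hW]) pr.hD) (le_max_right _ _)

lemma aux_dur_pos (S : Schedule pr σ) (r : ℝ) : 0 < pr.W / S.gspeed r :=
  div_pos pr.hW (aux_gspeed_pos S r)

lemma aux_dur_le (S : Schedule pr σ) (r : ℝ) : pr.W / S.gspeed r ≤ pr.D / 3 := by
  have hW := pr.hW; have hD := pr.hD
  have h2 : (0:ℝ) < 3 * pr.W / pr.D := div_pos (by linarith) hD
  have h1 : 3 * pr.W / pr.D ≤ S.gspeed r := le_max_right _ _
  have h3 : pr.W / S.gspeed r ≤ pr.W / (3 * pr.W / pr.D) :=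
    div_le_div_of_nonneg_left hW.le h2 h1
  have h4 : pr.W / (3 * pr.W / pr.D) = pr.D / 3 := by
    field_simp
  linarith [h3, h4 ▸ h3]

lemma aux_startsAt_unique {k : ℕ} {r r' : ℝ} (h : S.StartsAt k r)
    (h' : S.StartsAt k r') : r = r' := by
  rcases lt_trichotomy r r' with hlt | he | hgt
  · exact absurd h.1 (h'.2 r hlt)
  · exact he
  · exact absurd h'.1 (h.2 r' hgt)

lemma aux_txSpeed_eq (hS : S.IsGreedy) {k : ℕ} {r : ℝ} (h : S.StartsAt k r) :
    S.txSpeed k = (Set.Ico r (r + pr.W / S.gspeed r)).indicator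
      (fun _ => S.gspeed r) := by
  funext u
  simp only [txSpeed]
  by_cases hu : S.assign u = some k
  · obtain ⟨r', hr', hru, hur⟩ := hS.2.2 u k hu
    have hrr : r' = r := aux_startsAt_unique hr' h
    subst hrr
    rw [if_pos hu, Set.indicator_of_mem (Set.mem_Ico.mpr ⟨hru, hur⟩)]
    exact ((hS.2.1 k r' h).2.2.2 u hru hur).2
  · rw [if_neg hu, Set.indicator_of_notMem]
    intro hmem
    rw [Set.mem_Ico] at hmem
    exact hu ((hS.2.1 k r h).2.2.2 u hmem.1 hmem.2).1

lemma aux_bits_eq (hS : S.IsGreedy) {k : ℕ} {r : ℝ} (h : S.StartsAt k r)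
    {x : ℝ} (hx : 0 ≤ x) :
    S.bits k x = S.gspeed r *
      (volume (Set.Ioc 0 x ∩ Set.Ico r (r + pr.W / S.gspeed r))).toReal := by
  rw [bits, bitsIn]
  simp only [aux_txSpeed_eq hS h]
  rw [intervalIntegral.integral_of_le hx,
    MeasureTheory.setIntegral_indicator measurableSet_Ico,
    MeasureTheory.setIntegral_const, smul_eq_mul, mul_comm]
  rfl

lemma aux_delivered_of_end_le (hS : S.IsGreedy) {k : ℕ} {r : ℝ}
    (h : S.StartsAt k r) {x : ℝ} (hx : 0 ≤ x)
    (hrx : r + pr.W / S.gspeed r ≤ x) : S.Delivered k x := by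
  have h0r : 0 ≤ r := le_trans (σ.gen_nonneg k) (S.assign_after_gen r k h.1)
  have hc := aux_gspeed_pos S r
  have hd := aux_dur_pos S r
  rw [Delivered, aux_bits_eq hS h hx]
  set d := pr.W / S.gspeed r with hdd
  have hsub : Set.Ioo r (r + d) ⊆ Set.Ioc 0 x ∩ Set.Ico r (r + d) := by
    intro u hu
    exact ⟨⟨lt_of_le_of_lt h0r hu.1, le_trans hu.2.le hrx⟩, hu.1.le, hu.2⟩
  have hmono := measure_mono (μ := volume) hsub
  have hfin0 : volume (Set.Ioc (0:ℝ) x) ≠ ⊤ := by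
    rw [Real.volume_Ioc]; exact ENNReal.ofReal_ne_top
  have hfin : volume (Set.Ioc 0 x ∩ Set.Ico r (r + d)) ≠ ⊤ :=
    ne_top_of_le_ne_top hfin0 (measure_mono Set.inter_subset_left)
  have htr : d ≤ (volume (Set.Ioc 0 x ∩ Set.Ico r (r + d))).toReal := by
    have := ENNReal.toReal_mono hfin hmono
    rw [Real.volume_Ioo, ENNReal.toReal_ofReal (by linarith)] at this
    linarith
  have hWc : S.gspeed r * d = pr.W := by
    rw [hdd]; field_simp
  calc pr.W = S.gspeed r * d := hWc.symm
    _ ≤ _ := mul_le_mul_of_nonneg_left htr hc.le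

lemma aux_not_delivered_of_lt_end (hS : S.IsGreedy) {k : ℕ} {r : ℝ}
    (h : S.StartsAt k r) {x : ℝ} (hx : 0 ≤ x)
    (hxr : x < r + pr.W / S.gspeed r) : ¬ S.Delivered k x := by
  have hc := aux_gspeed_pos S r
  have hd := aux_dur_pos S r
  rw [Delivered, aux_bits_eq hS h hx]
  set d := pr.W / S.gspeed r with hdd
  have hsub : Set.Ioc 0 x ∩ Set.Ico r (r + d) ⊆ Set.Icc r x := by
    intro u hu; exact ⟨hu.2.1, hu.1.2⟩
  have h1 : (volume (Set.Ioc 0 x ∩ Set.Ico r (r + d))).toReal ≤ max (x - r) 0 := by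
    have hfin2 : volume (Set.Icc r x) ≠ ⊤ := by
      rw [Real.volume_Icc]; exact ENNReal.ofReal_ne_top
    have hm := ENNReal.toReal_mono hfin2 (measure_mono (μ := volume) hsub)
    rw [Real.volume_Icc] at hm
    rcases le_or_gt (x - r) 0 with hle | hlt
    · rw [ENNReal.ofReal_eq_zero.mpr hle] at hm
      simpa using le_trans hm (le_max_right _ _)
    · rw [ENNReal.toReal_ofReal hlt.le] at hm
      exact le_trans hm (le_max_left _ _)
  have h2 : max (x - r) 0 < d := max_lt (by linarith) hd
  have hWc : S.gspeed r * d = pr.W := by rw [hdd]; field_simp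
  intro hcon
  nlinarith [mul_le_mul_of_nonneg_left h1 hc.le, mul_lt_mul_of_pos_left h2 hc]

lemma aux_exists_start_of_delivered (hS : S.IsGreedy) {k : ℕ} {x : ℝ}
    (hx : 0 ≤ x) (hk : S.Delivered k x) :
    ∃ r, S.StartsAt k r ∧ r + pr.W / S.gspeed r ≤ x := by
  by_cases htx : ∃ u, S.assign u = some k
  · obtain ⟨u, hu⟩ := htx
    obtain ⟨r, hr, -, -⟩ := hS.2.2 u k hu
    refine ⟨r, hr, ?_⟩
    by_contra hlt
    exact aux_not_delivered_of_lt_end hS hr hx (lt_of_not_ge hlt) hk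
  · exfalso
    have hz : S.bits k x = 0 := by
      rw [bits, bitsIn]
      have hzz : ∀ u : ℝ, S.txSpeed k u = 0 := by
        intro u
        simp only [txSpeed]
        rw [if_neg (fun h => htx ⟨u, h⟩)]
      simp [hzz]
    rw [Delivered, hz] at hk
    linarith [pr.hW]

lemma aux_delivered_mono (hS : S.IsGreedy) {k : ℕ} {x y : ℝ} (hx : 0 ≤ x)
    (hxy : x ≤ y) (hk : S.Delivered k x) : S.Delivered k y := by
  obtain ⟨r, hr, hre⟩ := aux_exists_start_of_delivered hS hx hk
  exact aux_delivered_of_end_le hS hr (hx.trans hxy) (hre.trans hxy)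

lemma aux_bddAbove (hS : S.IsGreedy) {x : ℝ} (hx : 0 ≤ x) :
    BddAbove (insert (-σ.Δ0) {y | ∃ i, S.Delivered i x ∧ y = σ.gen i}) := by
  refine ⟨x, fun y hy => ?_⟩
  rcases hy with rfl | ⟨k, hk, rfl⟩
  · linarith [σ.hΔ0_nonneg]
  · obtain ⟨r, hr, hre⟩ := aux_exists_start_of_delivered hS hx hk
    have h1 := S.assign_after_gen r k hr.1
    have h2 := aux_dur_pos S r
    linarith

lemma aux_gen_le_latest (hS : S.IsGreedy) {k : ℕ} {x : ℝ} (hx : 0 ≤ x)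
    (hk : S.Delivered k x) : σ.gen k ≤ S.latest x :=
  le_csSup (aux_bddAbove hS hx) (Set.mem_insert_iff.mpr (Or.inr ⟨k, hk, rfl⟩))

lemma aux_latest_mono (hS : S.IsGreedy) {x y : ℝ} (hx : 0 ≤ x) (hxy : x ≤ y) :
    S.latest x ≤ S.latest y := by
  refine csSup_le_csSup (aux_bddAbove hS (hx.trans hxy)) (Set.insert_nonempty _ _) ?_
  apply Set.insert_subset_insert
  rintro z ⟨k, hk, rfl⟩
  exact ⟨k, aux_delivered_mono hS hx hxy hk, rfl⟩

end Schedule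

/-- Proposition 2: if the greedy policy begins to transmit a packet
`j` at time `t` at speed `s^g(t) > 3W/D`, then no packet was generated in the
interval `[t - 2D/3, t)`. -/
theorem greedy_fast_implies_no_recent_arrival (pr : Params) (σ : Arrivals pr)
    (S : Schedule pr σ) (hS : S.IsGreedy) (j : ℕ) (t : ℝ)
    (hstart : S.StartsAt j t) (hfast : 3 * pr.W / pr.D < S.gspeed t) :
    ∀ i, ¬ (t - 2 * pr.D / 3 ≤ σ.gen i ∧ σ.gen i < t) := by
  have hW := pr.hW
  have hD := pr.hD
  obtain ⟨hdT, hAvj, hmaxj, htxj⟩ := hS.2.1 j t hstart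
  have ht0 : 0 ≤ t := le_trans (σ.gen_nonneg j) (S.assign_after_gen t j hstart.1)
  have hb_pos : (0:ℝ) < 3 * pr.W / pr.D := div_pos (by linarith) hD
  -- the deadline gap is positive and < D/3
  have hgap_pos : 0 < S.deadline t - t := by
    by_contra hle
    push_neg at hle
    have h1 : pr.W / (S.deadline t - t) ≤ 0 :=
      div_nonpos_iff.mpr (Or.inl ⟨hW.le, hle⟩)
    have h2 : S.gspeed t ≤ 3 * pr.W / pr.D :=
      max_le (h1.trans hb_pos.le) le_rfl
    exact absurd hfast (not_lt.mpr h2)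
  have hgap_lt : S.deadline t - t < pr.D / 3 := by
    have hmax : S.gspeed t = pr.W / (S.deadline t - t) := by
      rcases max_choice (pr.W / (S.deadline t - t)) (3 * pr.W / pr.D) with h | h
      · exact h
      · exact absurd (h ▸ hfast) (lt_irrefl _)
    have h3 : 3 * pr.W / pr.D < pr.W / (S.deadline t - t) := hmax ▸ hfast
    rw [div_lt_div_iff₀ hD hgap_pos] at h3
    nlinarith
  have hdl : S.deadline t = S.latest t + pr.D := rfl
  have hlatest : S.latest t < t - 2 * pr.D / 3 := by linarith
  have htT : t ≤ σ.T := by linarith [hdT]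
  rintro i ⟨hi1, hi2⟩
  have hgi0 : 0 ≤ σ.gen i := σ.gen_nonneg i
  -- packet i is available throughout [gen i, t]
  have havail_i : ∀ u, σ.gen i ≤ u → u ≤ t → S.Available i u := by
    intro u hu1 hu2
    have hu0 : 0 ≤ u := hgi0.trans hu1
    refine ⟨⟨hu1, ?_⟩, ?_⟩
    · have := Schedule.aux_latest_mono hS hu0 hu2
      linarith
    · intro hdel
      have := Schedule.aux_gen_le_latest hS ht0
        (Schedule.aux_delivered_mono hS hu0 hu2 hdel)
      linarith
  -- each u ∈ [gen i, t) is covered by a window ending by t and starting before gen i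
  have hwindow_i : ∀ u, σ.gen i ≤ u → u < t →
      ∃ k r, S.StartsAt k r ∧ r ≤ u ∧ u < r + pr.W / S.gspeed r ∧
        r + pr.W / S.gspeed r ≤ t ∧ r < σ.gen i := by
    intro u hu1 hu2
    have hu0 : 0 ≤ u := hgi0.trans hu1
    have hav := havail_i u hu1 hu2.le
    obtain ⟨k, hk⟩ : ∃ k, S.assign u = some k := by
      cases h : S.assign u with
      | none =>
        exfalso
        have hdu : S.deadline u ≤ σ.T := by
          have h5 := Schedule.aux_latest_mono hS hu0 hu2.le
          have h6 : S.deadline u = S.latest u + pr.D := rfl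
          linarith
        exact hS.1 u hu0 (hu2.le.trans htT) h hdu ⟨i, hav⟩
      | some k => exact ⟨k, rfl⟩
    obtain ⟨r, hr, hru, hur⟩ := hS.2.2 u k hk
    have hend : r + pr.W / S.gspeed r ≤ t := by
      by_contra hlt
      push_neg at hlt
      have hjt : S.assign t = some k :=
        ((hS.2.1 k r hr).2.2.2 t (hru.trans hu2.le) hlt).1
      have hkj : k = j := by
        have h7 := hstart.1
        rw [hjt] at h7
        exact Option.some_inj.mp h7
      subst hkj
      have h8 : r = t := Schedule.aux_startsAt_unique hr hstart
      rw [h8] at hru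
      exact absurd hru (not_le.mpr hu2)
    have hrgen : r < σ.gen i := by
      by_contra hge
      push_neg at hge
      have hrt : r ≤ t := hru.trans hu2.le
      have havr := havail_i r hge hrt
      have hle := (hS.2.1 k r hr).2.2.1 i havr
      have hdel : S.Delivered k t :=
        Schedule.aux_delivered_of_end_le hS hr ht0 hend
      have h9 := Schedule.aux_gen_le_latest hS ht0 hdel
      linarith
    exact ⟨k, r, hr, hru, hur, hend, hrgen⟩
  -- the window covering gen i ends exactly at t
  obtain ⟨k, r, hrk, hrτ, hτe, hendt, hrlt⟩ := hwindow_i (σ.gen i) le_rfl hi2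
  have heq : r + pr.W / S.gspeed r = t := by
    by_contra hne
    have helt : r + pr.W / S.gspeed r < t := lt_of_le_of_ne hendt hne
    obtain ⟨k', r', hrk', hr'e, he'gt, hend', hr'lt⟩ :=
      hwindow_i (r + pr.W / S.gspeed r) hτe.le helt
    have h1 : S.assign (σ.gen i) = some k :=
      ((hS.2.1 k r hrk).2.2.2 _ hrτ hτe).1
    have h2 : S.assign (σ.gen i) = some k' :=
      ((hS.2.1 k' r' hrk').2.2.2 _ hr'lt.le (lt_trans hτe he'gt)).1
    have hkk : k = k' := by
      rw [h1] at h2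
      exact Option.some_inj.mp h2
    subst hkk
    have hrr : r = r' := Schedule.aux_startsAt_unique hrk hrk'
    rw [← hrr] at he'gt
    exact absurd he'gt (lt_irrefl _)
  -- facts about packet k, transmitted on [r, t)
  have hdelk : S.Delivered k t :=
    Schedule.aux_delivered_of_end_le hS hrk ht0 (le_of_eq heq)
  have hgenk_lt : σ.gen k < t - 2 * pr.D / 3 :=
    lt_of_le_of_lt (Schedule.aux_gen_le_latest hS ht0 hdelk) hlatest
  have hr_ge : t - pr.D / 3 ≤ r := by
    have := Schedule.aux_dur_le S r
    linarith [heq]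
  have hr_lt_t : r < t := by
    have := Schedule.aux_dur_pos S r
    linarith [heq]
  have hgk0 : 0 ≤ σ.gen k := σ.gen_nonneg k
  have hr0 : 0 ≤ r := hgk0.trans (S.assign_after_gen r k hrk.1)
  have hlatr : S.latest r < σ.gen k := (hS.2.1 k r hrk).2.1.1.2
  have hgenk_lt_r : σ.gen k < r := by linarith
  -- packet k is available throughout [gen k, r]
  have havail_k : ∀ u, σ.gen k ≤ u → u ≤ r → S.Available k u := by
    intro u hu1 hu2
    have hu0 : 0 ≤ u := hgk0.trans hu1
    refine ⟨⟨hu1, lt_of_le_of_lt (Schedule.aux_latest_mono hS hu0 hu2) hlatr⟩, ?_⟩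
    refine Schedule.aux_not_delivered_of_lt_end hS hrk hu0 ?_
    have := Schedule.aux_dur_pos S r
    linarith
  -- each u ∈ [gen k, r) is covered by a window ending by r and starting before gen k
  have hwindow_k : ∀ u, σ.gen k ≤ u → u < r →
      ∃ k₂ r₂, S.StartsAt k₂ r₂ ∧ r₂ ≤ u ∧ u < r₂ + pr.W / S.gspeed r₂ ∧
        r₂ + pr.W / S.gspeed r₂ ≤ r ∧ r₂ < σ.gen k := by
    intro u hu1 hu2
    have hu0 : 0 ≤ u := hgk0.trans hu1
    have hav := havail_k u hu1 hu2.le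
    obtain ⟨k₂, hk₂⟩ : ∃ k₂, S.assign u = some k₂ := by
      cases h : S.assign u with
      | none =>
        exfalso
        have hdu : S.deadline u ≤ σ.T := by
          have h5 := Schedule.aux_latest_mono hS hu0 (hu2.le.trans hr_lt_t.le)
          have h6 : S.deadline u = S.latest u + pr.D := rfl
          linarith
        exact hS.1 u hu0 ((hu2.le.trans hr_lt_t.le).trans htT) h hdu ⟨k, hav⟩
      | some k₂ => exact ⟨k₂, rfl⟩
    obtain ⟨r₂, hr₂, hru₂, hur₂⟩ := hS.2.2 u k₂ hk₂
    have hend₂ : r₂ + pr.W / S.gspeed r₂ ≤ r := by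
      by_contra hlt
      push_neg at hlt
      have hjr : S.assign r = some k₂ :=
        ((hS.2.1 k₂ r₂ hr₂).2.2.2 r (hru₂.trans hu2.le) hlt).1
      have hkk : k₂ = k := by
        have h7 := hrk.1
        rw [hjr] at h7
        exact Option.some_inj.mp h7
      subst hkk
      have h8 : r₂ = r := Schedule.aux_startsAt_unique hr₂ hrk
      rw [h8] at hru₂
      exact absurd hru₂ (not_le.mpr hu2)
    have hrgen₂ : r₂ < σ.gen k := by
      by_contra hge
      push_neg at hge
      have havr₂ := havail_k r₂ hge (hru₂.trans hu2.le)
      have hle := (hS.2.1 k₂ r₂ hr₂).2.2.1 k havr₂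
      have hdel₂ : S.Delivered k₂ r :=
        Schedule.aux_delivered_of_end_le hS hr₂ hr0 hend₂
      have h9 := Schedule.aux_gen_le_latest hS hr0 hdel₂
      linarith
    exact ⟨k₂, r₂, hr₂, hru₂, hur₂, hend₂, hrgen₂⟩
  -- the window covering gen k ends exactly at r
  obtain ⟨k₂, r₂, hrk₂, hrτ₂, hτe₂, hendr₂, hrlt₂⟩ :=
    hwindow_k (σ.gen k) le_rfl hgenk_lt_r
  have heq₂ : r₂ + pr.W / S.gspeed r₂ = r := by
    by_contra hne
    have helt : r₂ + pr.W / S.gspeed r₂ < r := lt_of_le_of_ne hendr₂ hne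
    obtain ⟨k₃, r₃, hrk₃, hr₃e, he₃gt, hend₃, hr₃lt⟩ :=
      hwindow_k (r₂ + pr.W / S.gspeed r₂) hτe₂.le helt
    have h1 : S.assign (σ.gen k) = some k₂ :=
      ((hS.2.1 k₂ r₂ hrk₂).2.2.2 _ hrτ₂ hτe₂).1
    have h2 : S.assign (σ.gen k) = some k₃ :=
      ((hS.2.1 k₃ r₃ hrk₃).2.2.2 _ hr₃lt.le (lt_trans hτe₂ he₃gt)).1
    have hkk : k₂ = k₃ := by
      rw [h1] at h2
      exact Option.some_inj.mp h2
    subst hkk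
    have hrr : r₂ = r₃ := Schedule.aux_startsAt_unique hrk₂ hrk₃
    rw [← hrr] at he₃gt
    exact absurd he₃gt (lt_irrefl _)
  -- the window [r₂, r) has length > D/3, contradiction
  have hlen : pr.W / S.gspeed r₂ ≤ pr.D / 3 := Schedule.aux_dur_le S r₂
  linarith [heq₂, hrlt₂, hgenk_lt, hr_ge]
end
end

section
/- If the greedy policy π^g transmits a packet j at speed strictly greater than 3W/D, then π^g begins transmitting packet j immediately at its generation time t_j and completes the transmission exactly at the deadline d(t_j), i.e., it transmits packet j at constant speed W/(d(t_j) − t_j) over the interval [t_j, d(t_j)). -/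
open MeasureTheory Set

noncomputable section

namespace Schedule

variable {pr : Params} {σ : Arrivals pr} (S : Schedule pr σ)

lemma gspeed_pos' (t : ℝ) : 0 < S.gspeed t := by
  have hW := pr.hW; have hD := pr.hD
  exact lt_of_lt_of_le (by positivity) (le_max_right _ _)

lemma dur_le' (t : ℝ) : pr.W / S.gspeed t ≤ pr.D / 3 := by
  have hg := S.gspeed_pos' t
  have hD := pr.hD; have hW := pr.hW
  have h3 : 3 * pr.W ≤ S.gspeed t * pr.D := (div_le_iff₀ hD).mp (le_max_right _ _)
  rw [div_le_div_iff₀ hg (by norm_num : (0:ℝ) < 3)]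
  nlinarith

lemma start_unique' {i : ℕ} {a b : ℝ} (ha : S.StartsAt i a) (hb : S.StartsAt i b) : a = b := by
  rcases lt_trichotomy a b with h | h | h
  · exact absurd ha.1 (hb.2 a h)
  · exact h
  · exact absurd hb.1 (ha.2 b h)

lemma txSpeed_eq' (hS : S.IsGreedy) {i : ℕ} {r : ℝ} (h : S.StartsAt i r) :
    S.txSpeed i = (Set.Ico r (r + pr.W / S.gspeed r)).indicator (fun _ => S.gspeed r) := by
  funext u
  by_cases hu : S.assign u = some i
  · obtain ⟨r', hr', hru, hue⟩ := hS.2.2 u i hu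
    have hrr : r' = r := S.start_unique' hr' h
    subst hrr
    have hmem : u ∈ Set.Ico r' (r' + pr.W / S.gspeed r') := ⟨hru, hue⟩
    rw [Set.indicator_of_mem hmem]
    have := ((hS.2.1 i r' h).2.2.2 u hru hue).2
    simp [Schedule.txSpeed, hu, this]
  · rw [Set.indicator_of_notMem]
    · simp [Schedule.txSpeed, hu]
    · intro hmem
      exact hu ((hS.2.1 i r h).2.2.2 u hmem.1 hmem.2).1

lemma txSpeed_integrable' (hS : S.IsGreedy) (i : ℕ) : Integrable (S.txSpeed i) volume := by
  by_cases hex : ∃ u, S.assign u = some i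
  · obtain ⟨u, hu⟩ := hex
    obtain ⟨r, hr, -, -⟩ := hS.2.2 u i hu
    rw [S.txSpeed_eq' hS hr]
    exact (integrable_indicator_iff measurableSet_Ico).2
      (integrableOn_const measure_Ico_lt_top.ne)
  · have hz : S.txSpeed i = fun _ => 0 := by
      funext u
      have : S.assign u ≠ some i := fun h => hex ⟨u, h⟩
      simp [Schedule.txSpeed, this]
    rw [hz]
    exact integrable_zero _ _ _

lemma txSpeed_nonneg' (i : ℕ) (u : ℝ) : 0 ≤ S.txSpeed i u := by
  unfold Schedule.txSpeed
  split
  · exact S.speed_nonneg u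
  · exact le_rfl

lemma bits_mono' (hS : S.IsGreedy) (i : ℕ) {s t : ℝ} (h : s ≤ t) :
    S.bits i s ≤ S.bits i t := by
  have hint : ∀ a b : ℝ, IntervalIntegrable (S.txSpeed i) volume a b :=
    fun a b => (S.txSpeed_integrable' hS i).intervalIntegrable
  have h1 : S.bits i s + ∫ u in s..t, S.txSpeed i u = S.bits i t :=
    intervalIntegral.integral_add_adjacent_intervals (hint 0 s) (hint s t)
  have h2 : 0 ≤ ∫ u in s..t, S.txSpeed i u :=
    intervalIntegral.integral_nonneg h (fun u _ => S.txSpeed_nonneg' i u)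
  linarith

lemma bits_eq_zero' (hS : S.IsGreedy) {i : ℕ} {r : ℝ} (h : S.StartsAt i r) {t : ℝ}
    (ht : t ≤ r) : S.bits i t = 0 := by
  have h0r : (0:ℝ) ≤ r := le_trans (σ.gen_nonneg i) (S.assign_after_gen r i h.1)
  show (∫ u in (0:ℝ)..t, S.txSpeed i u) = 0
  have hcong : (∫ u in (0:ℝ)..t, S.txSpeed i u) = ∫ u in (0:ℝ)..t, (0:ℝ) := by
    apply intervalIntegral.integral_congr_ae
    have hne : ∀ᵐ x : ℝ ∂volume, x ≠ r := by
      rw [MeasureTheory.ae_iff]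
      simpa using measure_singleton (α := ℝ) r
    filter_upwards [hne] with x hx hxI
    rw [S.txSpeed_eq' hS h]
    apply Set.indicator_of_notMem
    intro hmem
    rcases Set.mem_uIoc.1 hxI with ⟨_, h2x⟩ | ⟨_, h2x⟩
    · exact hx (le_antisymm (le_trans h2x ht) hmem.1)
    · exact hx (le_antisymm (le_trans h2x h0r) hmem.1)
  rw [hcong, intervalIntegral.integral_zero]

lemma delivered_at_end' (hS : S.IsGreedy) {i : ℕ} {r : ℝ} (h : S.StartsAt i r) :
    S.Delivered i (r + pr.W / S.gspeed r) := by
  have hg := S.gspeed_pos' r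
  have hdur : 0 < pr.W / S.gspeed r := div_pos pr.hW hg
  have hre : r ≤ r + pr.W / S.gspeed r := by linarith
  have hint : ∀ a b : ℝ, IntervalIntegrable (S.txSpeed i) volume a b :=
    fun a b => (S.txSpeed_integrable' hS i).intervalIntegrable
  have hsplit : S.bits i r + (∫ u in r..(r + pr.W / S.gspeed r), S.txSpeed i u)
      = S.bits i (r + pr.W / S.gspeed r) :=
    intervalIntegral.integral_add_adjacent_intervals (hint 0 r) (hint r _)
  have hzero : S.bits i r = 0 := S.bits_eq_zero' hS h le_rfl
  have hmid : (∫ u in r..(r + pr.W / S.gspeed r), S.txSpeed i u) = pr.W := by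
    have hcong : (∫ u in r..(r + pr.W / S.gspeed r), S.txSpeed i u)
        = ∫ _u in r..(r + pr.W / S.gspeed r), S.gspeed r := by
      apply intervalIntegral.integral_congr_ae
      have hne : ∀ᵐ x : ℝ ∂volume, x ≠ r + pr.W / S.gspeed r := by
        rw [MeasureTheory.ae_iff]
        simpa using measure_singleton (α := ℝ) (r + pr.W / S.gspeed r)
      filter_upwards [hne] with x hx hxI
      rw [Set.uIoc_of_le hre] at hxI
      rw [S.txSpeed_eq' hS h]
      have hmem : x ∈ Set.Ico r (r + pr.W / S.gspeed r) :=
        ⟨hxI.1.le, lt_of_le_of_ne hxI.2 hx⟩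
      exact Set.indicator_of_mem hmem _
    rw [hcong, intervalIntegral.integral_const, smul_eq_mul]
    have h1 : r + pr.W / S.gspeed r - r = pr.W / S.gspeed r := by ring
    rw [h1, div_mul_cancel₀ _ (ne_of_gt hg)]
  show pr.W ≤ S.bits i (r + pr.W / S.gspeed r)
  linarith

lemma not_delivered_of_le_start' (hS : S.IsGreedy) {i : ℕ} {r t : ℝ}
    (h : S.StartsAt i r) (ht : t ≤ r) : ¬ S.Delivered i t := by
  unfold Schedule.Delivered
  rw [S.bits_eq_zero' hS h ht]
  linarith [pr.hW]

lemma delivered_start_lt' (hS : S.IsGreedy) {m : ℕ} {t : ℝ} (h : S.Delivered m t) :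
    ∃ rm, S.StartsAt m rm ∧ rm < t := by
  by_cases hex : ∃ u, S.assign u = some m
  · obtain ⟨u, hu⟩ := hex
    obtain ⟨rm, hrm, -, -⟩ := hS.2.2 u m hu
    refine ⟨rm, hrm, ?_⟩
    by_contra hc
    exact S.not_delivered_of_le_start' hS hrm (not_lt.1 hc) h
  · exfalso
    have hz : S.txSpeed m = fun _ => 0 := by
      funext u
      have : S.assign u ≠ some m := fun hh => hex ⟨u, hh⟩
      simp [Schedule.txSpeed, this]
    have : S.bits m t = 0 := by
      show (∫ u in (0:ℝ)..t, S.txSpeed m u) = 0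
      rw [hz, intervalIntegral.integral_zero]
    have hWle : pr.W ≤ S.bits m t := h
    linarith [pr.hW]

lemma delivered_mono' (hS : S.IsGreedy) {m : ℕ} {s t : ℝ} (hst : s ≤ t)
    (h : S.Delivered m s) : S.Delivered m t :=
  le_trans h (S.bits_mono' hS m hst)

lemma latest_bddAbove' (hS : S.IsGreedy) (t : ℝ) :
    BddAbove (insert (-σ.Δ0) {x | ∃ i, S.Delivered i t ∧ x = σ.gen i}) := by
  refine ⟨max (-σ.Δ0) t, ?_⟩
  rintro x hx
  rcases Set.mem_insert_iff.1 hx with rfl | ⟨i, hi, rfl⟩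
  · exact le_max_left _ _
  · obtain ⟨rm, hrm, hlt⟩ := S.delivered_start_lt' hS hi
    exact le_max_of_le_right (le_trans (S.assign_after_gen rm i hrm.1) hlt.le)

lemma delivered_le_latest' (hS : S.IsGreedy) {m : ℕ} {t : ℝ} (h : S.Delivered m t) :
    σ.gen m ≤ S.latest t :=
  le_csSup (S.latest_bddAbove' hS t) (Set.mem_insert_iff.2 (Or.inr ⟨m, h, rfl⟩))

lemma latest_mono' (hS : S.IsGreedy) {s t : ℝ} (h : s ≤ t) :
    S.latest s ≤ S.latest t := by
  apply csSup_le_csSup (S.latest_bddAbove' hS t) (Set.insert_nonempty _ _)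
  apply Set.insert_subset_insert
  rintro x ⟨i, hi, rfl⟩
  exact ⟨i, S.delivered_mono' hS h hi, rfl⟩

lemma exists_prior_transmission' (hS : S.IsGreedy) {k : ℕ} {rk u : ℝ}
    (hst : S.StartsAt k rk) (hrkT : rk ≤ σ.T) (hu1 : σ.gen k ≤ u) (hu2 : u < rk) :
    ∃ m rm, S.StartsAt m rm ∧ rm < σ.gen k ∧ rm ≤ u ∧
      u < rm + pr.W / S.gspeed rm ∧ rm + pr.W / S.gspeed rm ≤ rk := by
  obtain ⟨hdT, ⟨⟨hgk, hlat⟩, hndel⟩, hmaxk, htxk⟩ := hS.2.1 k rk hst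
  have h0u : (0:ℝ) ≤ u := le_trans (σ.gen_nonneg k) hu1
  have hlat_u : S.latest u ≤ S.latest rk := S.latest_mono' hS hu2.le
  have hbusy : S.assign u ≠ none := by
    intro hnone
    refine hS.1 u h0u (le_trans hu2.le hrkT) hnone ?_ ⟨k, ?_⟩
    · have hdu : S.deadline u = S.latest u + pr.D := rfl
      have hdk : S.deadline rk = S.latest rk + pr.D := rfl
      linarith
    · exact ⟨⟨hu1, lt_of_le_of_lt hlat_u hlat⟩,
        S.not_delivered_of_le_start' hS hst hu2.le⟩
  obtain ⟨m, hm⟩ := Option.ne_none_iff_exists'.1 hbusy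
  obtain ⟨rm, hstm, hrmu, hue⟩ := hS.2.2 u m hm
  have hrmrk : rm < rk := lt_of_le_of_lt hrmu hu2
  have hem : rm + pr.W / S.gspeed rm ≤ rk := by
    by_contra hc
    push_neg at hc
    have hark : S.assign rk = some m :=
      ((hS.2.1 m rm hstm).2.2.2 rk hrmrk.le hc).1
    have hmk : m = k := Option.some_inj.1 (hark.symm.trans hst.1)
    subst hmk
    have := S.start_unique' hstm hst
    linarith
  have hrmgk : rm < σ.gen k := by
    by_contra hc
    push_neg at hc
    have hlat_rm : S.latest rm ≤ S.latest rk := S.latest_mono' hS hrmrk.le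
    have havailk : S.Available k rm :=
      ⟨⟨hc, lt_of_le_of_lt hlat_rm hlat⟩,
        S.not_delivered_of_le_start' hS hst hrmrk.le⟩
    have hmax := (hS.2.1 m rm hstm).2.2.1 k havailk
    have hdelm : S.Delivered m rk :=
      S.delivered_mono' hS hem (S.delivered_at_end' hS hstm)
    have := S.delivered_le_latest' hS hdelm
    linarith
  exact ⟨m, rm, hstm, hrmgk, hrmu, hue, hem⟩

end Schedule

/-- Corollary 3: if the greedy policy transmits a packet `j` at
speed strictly greater than `3W/D`, then it begins transmitting packet `j`
immediately at its generation time `t_j` and transmits it at the constant speed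
`W/(d(t_j) - t_j)` over the whole interval `[t_j, d(t_j))`, completing exactly at
the deadline `d(t_j)`. -/
theorem greedy_fast_implies_immediate_transmission (pr : Params)
    (σ : Arrivals pr) (S : Schedule pr σ) (hS : S.IsGreedy) (j : ℕ) (t : ℝ)
    (ht : S.assign t = some j) (hfast : 3 * pr.W / pr.D < S.speed t) :
    S.StartsAt j (σ.gen j) ∧
    S.gspeed (σ.gen j) = pr.W / (S.deadline (σ.gen j) - σ.gen j) ∧
    (∀ u, σ.gen j ≤ u → u < S.deadline (σ.gen j) →
      S.assign u = some j ∧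
      S.speed u = pr.W / (S.deadline (σ.gen j) - σ.gen j)) ∧
    S.Delivered j (S.deadline (σ.gen j)) := by
  have hW := pr.hW
  have hD := pr.hD
  obtain ⟨r, hstart, hrt, hte⟩ := hS.2.2 t j ht
  have hsp : S.speed t = S.gspeed r := ((hS.2.1 j r hstart).2.2.2 t hrt hte).2
  have hfast' : 3 * pr.W / pr.D < S.gspeed r := hsp ▸ hfast
  have h3WD : (0:ℝ) < 3 * pr.W / pr.D := by positivity
  have hgmax : S.gspeed r = pr.W / (S.deadline r - r) := by
    unfold Schedule.gspeed at hfast' ⊢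
    rcases max_choice (pr.W / (S.deadline r - r)) (3 * pr.W / pr.D) with h | h
    · exact h
    · rw [h] at hfast'
      exact absurd hfast' (lt_irrefl _)
  have hden : 0 < S.deadline r - r := by
    by_contra hc
    push_neg at hc
    have : pr.W / (S.deadline r - r) ≤ 0 := div_nonpos_of_nonneg_of_nonpos hW.le hc
    linarith
  have hden0 : S.deadline r - r ≠ 0 := ne_of_gt hden
  have hW0 : pr.W ≠ 0 := ne_of_gt hW
  have hWg : pr.W / S.gspeed r = S.deadline r - r := by
    rw [hgmax]
    field_simp
  have hdr3 : S.deadline r - r < pr.D / 3 := by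
    rw [hgmax, div_lt_div_iff₀ hD hden] at hfast'
    nlinarith
  have hdT := (hS.2.1 j r hstart).1
  have hav := (hS.2.1 j r hstart).2.1
  have hgjr : σ.gen j ≤ r := hav.1.1
  have hlatr : S.latest r < σ.gen j := hav.1.2
  have hdlr : S.deadline r = S.latest r + pr.D := rfl
  have hrT : r ≤ σ.T := by linarith
  have hrgj : r = σ.gen j := by
    by_contra hne
    have hlt : σ.gen j < r := lt_of_le_of_ne hgjr (fun h => hne h.symm)
    have hL : S.latest r < r - 2 * pr.D / 3 := by linarith
    set u₁ := max (σ.gen j) ((S.latest r + 2 * pr.D / 3 + r) / 2) with hu₁def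
    have hu₁r : u₁ < r := max_lt hlt (by linarith)
    have hu₁g : σ.gen j ≤ u₁ := le_max_left _ _
    have hu₁lb : (S.latest r + 2 * pr.D / 3 + r) / 2 ≤ u₁ := le_max_right _ _
    obtain ⟨i, r', hsti, hr'gj, hr'u, hue', he'r⟩ :=
      S.exists_prior_transmission' hS hstart hrT hu₁g hu₁r
    have hdeli : S.Delivered i r :=
      S.delivered_mono' hS he'r (S.delivered_at_end' hS hsti)
    have hgiL : σ.gen i ≤ S.latest r := S.delivered_le_latest' hS hdeli
    have hdur' : pr.W / S.gspeed r' ≤ pr.D / 3 := S.dur_le' r'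
    have hkey : σ.gen i + pr.D / 3 < r' := by
      have h1 : u₁ < r' + pr.D / 3 := lt_of_lt_of_le hue' (by linarith)
      linarith
    have h2i := hS.2.1 i r' hsti
    have hr'T : r' ≤ σ.T := le_trans (hr'u.trans hu₁r.le) hrT
    set u₂ := (σ.gen i + pr.D / 3 + r') / 2 with hu₂def
    have hu₂g : σ.gen i ≤ u₂ := by linarith
    have hu₂r' : u₂ < r' := by linarith
    obtain ⟨m, rm, hstm, hrmgi, hrmu₂, hu₂em, hemr'⟩ :=
      S.exists_prior_transmission' hS hsti hr'T hu₂g hu₂r'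
    have hdurm : pr.W / S.gspeed rm ≤ pr.D / 3 := S.dur_le' rm
    have : σ.gen i < rm := by linarith
    linarith
  rw [← hrgj]
  have hWge : r + pr.W / S.gspeed r = S.deadline r := by
    rw [hWg]; ring
  refine ⟨hstart, hgmax, ?_, ?_⟩
  · intro u hu1 hu2
    have htx := (hS.2.1 j r hstart).2.2.2 u hu1 (by linarith)
    exact ⟨htx.1, by rw [htx.2, hgmax]⟩
  · have hdel := S.delivered_at_end' hS hstart
    rwa [hWge] at hdel
end
end

section
/- Let D > 0 and B > 0 be reals, let A be a real with A ≥ 3B, let m ≥ 1 be an integer, let y be an integer with 0 ≤ y ≤ m, and let E be a real with E ≥ y·A·D/3. Then ((m+1)·A·D + E) / ((m−y)·B·D + E) ≤ 2A/B + 1. -/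
/-- let `D > 0`, `B > 0` be reals, `A ≥ 3B` a real, `m ≥ 1` an
integer, `y` an integer with `0 ≤ y ≤ m`, and `E` a real with `E ≥ y·A·D/3`.
Then `((m+1)·A·D + E) / ((m-y)·B·D + E) ≤ 2A/B + 1`.  (This is the chain of
estimates in Step 1 of the proof of the competitive-ratio upper bound for the
greedy policy, with `A = P(3W/D)`, `B = P(W/D)`.) -/
theorem greedy_cr_arithmetic
    (D B A : ℝ) (hD : 0 < D) (hB : 0 < B) (hA : 3 * B ≤ A)
    (m y : ℕ) (hm : 1 ≤ m) (hy : y ≤ m)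
    (E : ℝ) (hE : (y : ℝ) * A * D / 3 ≤ E) :
    (((m : ℝ) + 1) * A * D + E) / (((m : ℝ) - (y : ℝ)) * B * D + E)
      ≤ 2 * A / B + 1 := by
  have hmR : (1 : ℝ) ≤ (m : ℝ) := by exact_mod_cast hm
  have hyR : (y : ℝ) ≤ (m : ℝ) := by exact_mod_cast hy
  have hy0 : (0 : ℝ) ≤ (y : ℝ) := Nat.cast_nonneg y
  have hApos : 0 < A := lt_of_lt_of_le (by positivity) hA
  have hden : 0 < ((m : ℝ) - (y : ℝ)) * B * D + E := by
    nlinarith [mul_pos hB hD, mul_pos hApos hD, mul_nonneg hy0 (mul_pos hApos hD).le,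
      mul_nonneg (mul_nonneg hy0 hD.le) (sub_nonneg.mpr hA)]
  have h1 : 2 * A / B + 1 = (2 * A + B) / B := by field_simp
  rw [h1, div_le_div_iff₀ hden hB]
  nlinarith [hE, mul_pos hApos hD, mul_pos hB hD,
    mul_nonneg (mul_nonneg hy0 hD.le) (mul_nonneg hApos.le (sub_nonneg.mpr hA)),
    mul_nonneg (mul_nonneg (sub_nonneg.mpr hyR) hD.le) (mul_nonneg hB.le hB.le),
    mul_le_mul_of_nonneg_left hE (by linarith : (0:ℝ) ≤ 2 * A),
    mul_nonneg (mul_nonneg (sub_nonneg.mpr hmR) hD.le) (mul_nonneg hApos.le hB.le)]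
end
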